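/- Define h(ω) := 1 − √π·ω·exp(ω²)·erfc(ω), whose derivative is h'(ω) = 2ω − √π·(1 + 2ω²)·exp(ω²)·erfc(ω). Then for every ω ≥ 0: 2ω − 2(1 + 2ω²)/(ω + √(ω² + 4/π)) ≤ h'(ω) ≤ 2ω − 2(1 + 2ω²)/(ω + √(ω² + 2)). -/

import Mathlib

open Real MeasureTheory Set

/-- The complementary error function. -/
noncomputable def erfc (z : ℝ) : ℝ :=
  (2 / Real.sqrt π) * ∫ u in Set.Ioi z, Real.exp (-u ^ 2)

/-- `h(ω) = 1 − √π · ω · exp(ω²) · erfc(ω)`. -/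
noncomputable def hfun (ω : ℝ) : ℝ :=
  1 - Real.sqrt π * ω * Real.exp (ω ^ 2) * erfc ω

noncomputable def Afun (x : ℝ) : ℝ := ∫ u in Set.Ioi x, Real.exp (-u ^ 2)

lemma gauss_integrable : MeasureTheory.Integrable (fun u : ℝ => Real.exp (-u ^ 2)) := by
  simpa using integrable_exp_neg_mul_sq (by norm_num : (0:ℝ) < 1)

lemma Afun_eq (x : ℝ) :
    Afun x = (∫ u in Set.Ioi (0:ℝ), Real.exp (-u ^ 2)) - ∫ u in (0:ℝ)..x, Real.exp (-u ^ 2) := by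
  rcases le_total 0 x with h | h
  · rw [intervalIntegral.integral_of_le h, eq_sub_iff_add_eq, Afun, add_comm,
      ← setIntegral_union (Ioc_disjoint_Ioi le_rfl) measurableSet_Ioi
        gauss_integrable.integrableOn gauss_integrable.integrableOn,
      Ioc_union_Ioi_eq_Ioi h]
  · rw [intervalIntegral.integral_of_ge h, sub_neg_eq_add, Afun, eq_comm, add_comm,
      ← setIntegral_union (Ioc_disjoint_Ioi le_rfl) measurableSet_Ioi
        gauss_integrable.integrableOn gauss_integrable.integrableOn,
      Ioc_union_Ioi_eq_Ioi h]

lemma Afun_zero : Afun 0 = Real.sqrt π / 2 := by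
  have := integral_gaussian_Ioi 1
  simp only [neg_mul, one_mul, div_one] at this
  simpa [Afun] using this

lemma hasDerivAt_Afun (x : ℝ) : HasDerivAt Afun (-Real.exp (-x ^ 2)) x := by
  have hc : Continuous fun u : ℝ => Real.exp (-u ^ 2) := by continuity
  have h1 : HasDerivAt (fun y => ∫ u in (0:ℝ)..y, Real.exp (-u ^ 2)) (Real.exp (-x ^ 2)) x :=
    intervalIntegral.integral_hasDerivAt_right (hc.intervalIntegrable _ _)
      (hc.stronglyMeasurableAtFilter _ _) hc.continuousAt
  have h2 := (hasDerivAt_const x (∫ u in Set.Ioi (0:ℝ), Real.exp (-u ^ 2))).sub h1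
  simp only [zero_sub] at h2
  exact h2.congr_of_eventuallyEq (Filter.Eventually.of_forall fun y => (Afun_eq y))

lemma Afun_tendsto : Filter.Tendsto Afun Filter.atTop (nhds 0) := by
  have h := MeasureTheory.intervalIntegral_tendsto_integral_Ioi 0
    gauss_integrable.integrableOn Filter.tendsto_id
  have h2 : Filter.Tendsto
      (fun x => (∫ u in Set.Ioi (0:ℝ), Real.exp (-u ^ 2)) - ∫ u in (0:ℝ)..x, Real.exp (-u ^ 2))
      Filter.atTop (nhds ((∫ u in Set.Ioi (0:ℝ), Real.exp (-u ^ 2))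
        - ∫ u in Set.Ioi (0:ℝ), Real.exp (-u ^ 2))) :=
    (tendsto_const_nhds).sub h
  simp only [sub_self] at h2
  exact h2.congr fun x => (Afun_eq x).symm

noncomputable def Efun (c : ℝ) (x : ℝ) : ℝ :=
  Real.exp (-x ^ 2) / (x + Real.sqrt (x ^ 2 + c)) - Afun x

lemma sqrt_facts {c x : ℝ} (hc : 0 < c) :
    0 < Real.sqrt (x ^ 2 + c) ∧ Real.sqrt (x ^ 2 + c) ^ 2 = x ^ 2 + c ∧
      0 < x + Real.sqrt (x ^ 2 + c) := by
  have h0 : (0:ℝ) < x ^ 2 + c := by positivity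
  have hs : Real.sqrt (x ^ 2 + c) ^ 2 = x ^ 2 + c := Real.sq_sqrt h0.le
  have habs : |x| < Real.sqrt (x ^ 2 + c) := by
    rw [← Real.sqrt_sq_eq_abs]
    exact Real.sqrt_lt_sqrt (sq_nonneg x) (by linarith)
  exact ⟨(abs_nonneg x).trans_lt habs, hs, by nlinarith [neg_abs_le x]⟩

lemma hasDerivAt_Efun {c : ℝ} (hc : 0 < c) (x : ℝ) :
    HasDerivAt (Efun c)
      (Real.exp (-x ^ 2) * (x ^ 2 + c - 1 - x * Real.sqrt (x ^ 2 + c)) /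
        (Real.sqrt (x ^ 2 + c) * (x + Real.sqrt (x ^ 2 + c)))) x := by
  obtain ⟨hs_pos, hs_sq, hxs⟩ := sqrt_facts (c := c) (x := x) hc
  set s := Real.sqrt (x ^ 2 + c) with hs_def
  have hnum : HasDerivAt (fun y : ℝ => Real.exp (-y ^ 2)) (Real.exp (-x ^ 2) * (-(2 * x))) x := by
    have h1 : HasDerivAt (fun y : ℝ => -y ^ 2) (-(2 * x)) x := by
      exact (by simpa using (hasDerivAt_pow 2 x).neg : HasDerivAt (-fun y : ℝ => y ^ 2) (-(2 * x)) x)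
    exact h1.exp
  have hsqrt : HasDerivAt (fun y : ℝ => Real.sqrt (y ^ 2 + c)) (x / s) x := by
    have hin : HasDerivAt (fun y : ℝ => y ^ 2 + c) (2 * x) x := by
      simpa using (hasDerivAt_pow 2 x).add_const c
    have h2 := (Real.hasDerivAt_sqrt (by positivity : x ^ 2 + c ≠ 0)).comp x hin
    refine h2.congr_deriv ?_
    field_simp
    ring
  have hden : HasDerivAt (fun y : ℝ => y + Real.sqrt (y ^ 2 + c)) (1 + x / s) x :=
    (hasDerivAt_id x).add hsqrt
  have hdiv := (hnum.div hden (by linarith)).sub (hasDerivAt_Afun x)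
  refine hdiv.congr_deriv ?_
  rw [← hs_def]
  rw [show c = s ^ 2 - x ^ 2 by linarith]
  field_simp
  ring

lemma Efun_tendsto {c : ℝ} (hc : 0 < c) :
    Filter.Tendsto (Efun c) Filter.atTop (nhds 0) := by
  have hfirst : Filter.Tendsto (fun x : ℝ => Real.exp (-x ^ 2) / (x + Real.sqrt (x ^ 2 + c)))
      Filter.atTop (nhds 0) := by
    apply squeeze_zero' (g := fun x : ℝ => x⁻¹)
    · filter_upwards [Filter.eventually_ge_atTop (1:ℝ)] with x hx
      have := (sqrt_facts (c := c) (x := x) hc).2.2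
      positivity
    · filter_upwards [Filter.eventually_ge_atTop (1:ℝ)] with x hx
      have hs0 : 0 ≤ Real.sqrt (x ^ 2 + c) := Real.sqrt_nonneg _
      have he : Real.exp (-x ^ 2) ≤ 1 := by
        rw [show (1:ℝ) = Real.exp 0 by rw [Real.exp_zero]]
        exact Real.exp_le_exp.2 (by nlinarith)
      rw [div_le_iff₀ (by linarith)]
      have hxpos : (0:ℝ) < x := by linarith
      have h1 : (1:ℝ) ≤ x⁻¹ * (x + Real.sqrt (x ^ 2 + c)) := by
        rw [mul_add, inv_mul_cancel₀ hxpos.ne']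
        have := mul_nonneg (inv_nonneg.2 hxpos.le) hs0
        linarith
      linarith
    · exact tendsto_inv_atTop_zero
  have := hfirst.sub Afun_tendsto
  rw [sub_zero] at this
  exact this

lemma signA_two {x : ℝ} : 0 ≤ x ^ 2 + 2 - 1 - x * Real.sqrt (x ^ 2 + 2) := by
  have hs : Real.sqrt (x ^ 2 + 2) ^ 2 = x ^ 2 + 2 := Real.sq_sqrt (by positivity)
  have hs0 : 0 ≤ Real.sqrt (x ^ 2 + 2) := Real.sqrt_nonneg _
  nlinarith [sq_nonneg (x * Real.sqrt (x ^ 2 + 2) - x ^ 2 - 1),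
    sq_nonneg (x - Real.sqrt (x ^ 2 + 2)), sq_nonneg (x + Real.sqrt (x ^ 2 + 2))]

lemma signA_pos {c x : ℝ} (hc1 : 1 < c) (hx0 : x ^ 2 * (2 - c) ≤ (c - 1) ^ 2) :
    0 ≤ x ^ 2 + c - 1 - x * Real.sqrt (x ^ 2 + c) := by
  have hs : Real.sqrt (x ^ 2 + c) ^ 2 = x ^ 2 + c := Real.sq_sqrt (by positivity)
  have hs0 : 0 ≤ Real.sqrt (x ^ 2 + c) := Real.sqrt_nonneg _
  nlinarith [sq_nonneg (x * Real.sqrt (x ^ 2 + c) - (x ^ 2 + c - 1))]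

lemma signA_neg {c x : ℝ} (hc1 : 1 < c) (hx : 0 ≤ x)
    (hx0 : (c - 1) ^ 2 ≤ x ^ 2 * (2 - c)) :
    x ^ 2 + c - 1 - x * Real.sqrt (x ^ 2 + c) ≤ 0 := by
  have hs : Real.sqrt (x ^ 2 + c) ^ 2 = x ^ 2 + c := Real.sq_sqrt (by positivity)
  have hs0 : 0 ≤ Real.sqrt (x ^ 2 + c) := Real.sqrt_nonneg _
  nlinarith [mul_nonneg hx hs0, sq_nonneg (x * Real.sqrt (x ^ 2 + c) + (x ^ 2 + c - 1))]

/-- Lower Komatsu bound: `Afun x ≥ exp(-x²)/(x+√(x²+2))` for all `x`. -/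
lemma Efun_two_nonpos (x : ℝ) : Efun 2 x ≤ 0 := by
  have hmono : Monotone (Efun 2) := by
    apply monotone_of_hasDerivAt_nonneg (f' := fun y =>
      Real.exp (-y ^ 2) * (y ^ 2 + 2 - 1 - y * Real.sqrt (y ^ 2 + 2)) /
        (Real.sqrt (y ^ 2 + 2) * (y + Real.sqrt (y ^ 2 + 2))))
      (fun y => hasDerivAt_Efun (by norm_num) y)
    intro y
    obtain ⟨hs_pos, hs_sq, hxs⟩ := sqrt_facts (c := 2) (x := y) (by norm_num)
    have := signA_two (x := y)
    positivity
  exact ge_of_tendsto (Efun_tendsto (by norm_num))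
    (Filter.eventually_atTop.2 ⟨x, fun y hy => hmono hy⟩)

lemma c_facts : 1 < 4 / π ∧ 4 / π < 2 := by
  constructor
  · rw [lt_div_iff₀ pi_pos]
    nlinarith [pi_lt_d2]
  · rw [div_lt_iff₀ pi_pos]
    nlinarith [pi_gt_three]

lemma Efun_pi_zero : Efun (4 / π) 0 = 0 := by
  have hπ : (0:ℝ) < Real.sqrt π := Real.sqrt_pos.2 pi_pos
  have h4 : Real.sqrt ((0:ℝ) ^ 2 + 4 / π) = 2 / Real.sqrt π := by
    rw [show (0:ℝ) ^ 2 + 4 / π = (2 / Real.sqrt π) ^ 2 by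
      rw [div_pow, Real.sq_sqrt pi_pos.le]; norm_num]
    exact Real.sqrt_sq (by positivity)
  rw [Efun, h4, Afun_zero]
  rw [show (0:ℝ) + 2 / Real.sqrt π = 2 / Real.sqrt π by ring]
  rw [show -(0:ℝ) ^ 2 = 0 by ring, Real.exp_zero]
  rw [one_div_div]
  rw [sub_eq_zero]

/-- Upper Komatsu bound: `Afun x ≤ exp(-x²)/(x+√(x²+4/π))` for `x ≥ 0`. -/
lemma Efun_pi_nonneg {x : ℝ} (hx : 0 ≤ x) : 0 ≤ Efun (4 / π) x := by
  obtain ⟨hc1, hc2⟩ := c_facts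
  set c : ℝ := 4 / π with hc_def
  have hc : 0 < c := by linarith
  set x₀ : ℝ := Real.sqrt ((c - 1) ^ 2 / (2 - c)) with hx₀_def
  have hx₀_sq : x₀ ^ 2 = (c - 1) ^ 2 / (2 - c) := Real.sq_sqrt (div_nonneg (sq_nonneg _) (by linarith))
  have hx₀_nonneg : 0 ≤ x₀ := Real.sqrt_nonneg _
  have hderiv : ∀ y : ℝ, HasDerivAt (Efun c)
      (Real.exp (-y ^ 2) * (y ^ 2 + c - 1 - y * Real.sqrt (y ^ 2 + c)) /
        (Real.sqrt (y ^ 2 + c) * (y + Real.sqrt (y ^ 2 + c)))) y :=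
    fun y => hasDerivAt_Efun hc y
  rcases le_total x x₀ with hxx | hxx
  · -- monotone on [0, x₀]
    have hmono : MonotoneOn (Efun c) (Set.Icc 0 x₀) := by
      apply monotoneOn_of_hasDerivWithinAt_nonneg (f' := fun y =>
        Real.exp (-y ^ 2) * (y ^ 2 + c - 1 - y * Real.sqrt (y ^ 2 + c)) /
          (Real.sqrt (y ^ 2 + c) * (y + Real.sqrt (y ^ 2 + c)))) (convex_Icc 0 x₀)
        (fun y _ => (hderiv y).continuousAt.continuousWithinAt)
        (fun y _ => (hderiv y).hasDerivWithinAt)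
      intro y hy
      rw [interior_Icc] at hy
      obtain ⟨hs_pos, hs_sq, hxs⟩ := sqrt_facts (c := c) (x := y) hc
      have hy2 : y ^ 2 * (2 - c) ≤ (c - 1) ^ 2 := by
        have : y ^ 2 ≤ x₀ ^ 2 := by nlinarith [hy.1, hy.2]
        rw [hx₀_sq] at this
        rw [← le_div_iff₀ (by linarith : (0:ℝ) < 2 - c)]
        exact this
      have := signA_pos hc1 hy2
      positivity
    have h0 := hmono (Set.mem_Icc.2 ⟨le_refl 0, hx₀_nonneg⟩) (Set.mem_Icc.2 ⟨hx, hxx⟩) hx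
    rw [Efun_pi_zero] at h0
    exact h0
  · -- antitone on [x₀, ∞)
    have hanti : AntitoneOn (Efun c) (Set.Ici x₀) := by
      apply antitoneOn_of_hasDerivWithinAt_nonpos (f' := fun y =>
        Real.exp (-y ^ 2) * (y ^ 2 + c - 1 - y * Real.sqrt (y ^ 2 + c)) /
          (Real.sqrt (y ^ 2 + c) * (y + Real.sqrt (y ^ 2 + c)))) (convex_Ici x₀)
        (fun y _ => (hderiv y).continuousAt.continuousWithinAt)
        (fun y _ => (hderiv y).hasDerivWithinAt)
      intro y hy
      rw [interior_Ici] at hy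
      obtain ⟨hs_pos, hs_sq, hxs⟩ := sqrt_facts (c := c) (x := y) hc
      have hy0 : 0 ≤ y := le_trans hx₀_nonneg hy.le
      have hy2 : (c - 1) ^ 2 ≤ y ^ 2 * (2 - c) := by
        have : x₀ ^ 2 ≤ y ^ 2 := by nlinarith [(show x₀ < y from hy).le]
        rw [hx₀_sq] at this
        rw [← div_le_iff₀ (by linarith : (0:ℝ) < 2 - c)]
        exact this
      have hsg := signA_neg hc1 hy0 hy2
      apply div_nonpos_of_nonpos_of_nonneg
      · exact mul_nonpos_of_nonneg_of_nonpos (Real.exp_pos _).le hsg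
      · positivity
    apply le_of_tendsto (Efun_tendsto hc)
    filter_upwards [Filter.eventually_ge_atTop x] with y hy
    exact hanti (Set.mem_Ici.2 hxx) (Set.mem_Ici.2 (le_trans hxx hy)) hy

lemma hfun_eq : hfun = fun ω => 1 - 2 * ω * Real.exp (ω ^ 2) * Afun ω := by
  funext ω
  have hπ : Real.sqrt π ≠ 0 := by positivity
  unfold hfun erfc
  rw [show (∫ u in Set.Ioi ω, Real.exp (-u ^ 2)) = Afun ω from rfl]
  field_simp

lemma hasDerivAt_hfun (ω : ℝ) :
    HasDerivAt hfun (2 * ω - 2 * (1 + 2 * ω ^ 2) * Real.exp (ω ^ 2) * Afun ω) ω := by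
  rw [hfun_eq]
  have h1 : HasDerivAt (fun y : ℝ => Real.exp (y ^ 2)) (Real.exp (ω ^ 2) * (2 * ω)) ω := by
    have : HasDerivAt (fun y : ℝ => y ^ 2) (2 * ω) ω := by simpa using hasDerivAt_pow 2 ω
    exact this.exp
  have h2 : HasDerivAt (fun y : ℝ => 2 * y) (2 : ℝ) ω := by
    simpa using (hasDerivAt_id ω).const_mul (2:ℝ)
  have h3 := ((h2.mul h1).mul (hasDerivAt_Afun ω)).const_sub (1:ℝ)
  refine h3.congr_deriv ?_
  have hee : Real.exp (ω ^ 2) * Real.exp (-ω ^ 2) = 1 := by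
    rw [← Real.exp_add]; simp
  simp only [Pi.mul_apply]
  linear_combination (2*ω) * hee

theorem hfun_deriv_bounds :
    (∀ ω : ℝ, deriv hfun ω =
      2 * ω - Real.sqrt π * (1 + 2 * ω ^ 2) * Real.exp (ω ^ 2) * erfc ω) ∧
    ∀ ω : ℝ, 0 ≤ ω →
      2 * ω - 2 * (1 + 2 * ω ^ 2) / (ω + Real.sqrt (ω ^ 2 + 4 / π)) ≤ deriv hfun ω ∧
        deriv hfun ω ≤ 2 * ω - 2 * (1 + 2 * ω ^ 2) / (ω + Real.sqrt (ω ^ 2 + 2)) := by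
  have hπ : Real.sqrt π ≠ 0 := by positivity
  have herfc : ∀ ω : ℝ, Real.sqrt π * (1 + 2 * ω ^ 2) * Real.exp (ω ^ 2) * erfc ω
      = 2 * (1 + 2 * ω ^ 2) * Real.exp (ω ^ 2) * Afun ω := by
    intro ω
    unfold erfc
    rw [show (∫ u in Set.Ioi ω, Real.exp (-u ^ 2)) = Afun ω from rfl]
    field_simp
  constructor
  · intro ω
    rw [(hasDerivAt_hfun ω).deriv, herfc ω]
  · intro ω hω
    rw [(hasDerivAt_hfun ω).deriv]
    have hcoef : (0:ℝ) < 2 * (1 + 2 * ω ^ 2) := by positivity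
    have hexp : Real.exp (ω ^ 2) * Real.exp (-ω ^ 2) = 1 := by
      rw [← Real.exp_add]; simp
    constructor
    · -- need : 2ω - 2(1+2ω²)/(ω+√(ω²+4/π)) ≤ 2ω - 2(1+2ω²)·e^{ω²}·A
      obtain ⟨hc1, hc2⟩ := c_facts
      obtain ⟨hs_pos, hs_sq, hxs⟩ := sqrt_facts (c := 4 / π) (x := ω) (by linarith)
      have hE := Efun_pi_nonneg hω
      rw [Efun, sub_nonneg] at hE
      have h1 : Real.exp (ω ^ 2) * Afun ω ≤ 1 / (ω + Real.sqrt (ω ^ 2 + 4 / π)) := by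
        calc Real.exp (ω ^ 2) * Afun ω
            ≤ Real.exp (ω ^ 2) * (Real.exp (-ω ^ 2) / (ω + Real.sqrt (ω ^ 2 + 4 / π))) :=
              mul_le_mul_of_nonneg_left hE (Real.exp_pos _).le
          _ = 1 / (ω + Real.sqrt (ω ^ 2 + 4 / π)) := by
              rw [mul_div_assoc'] at *
              rw [hexp]
      have h2 := mul_le_mul_of_nonneg_left h1 hcoef.le
      rw [mul_one_div] at h2
      nlinarith [h2]
    · obtain ⟨hs_pos, hs_sq, hxs⟩ := sqrt_facts (c := 2) (x := ω) (by norm_num)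
      have hE := Efun_two_nonpos ω
      rw [Efun, sub_nonpos] at hE
      have h1 : 1 / (ω + Real.sqrt (ω ^ 2 + 2)) ≤ Real.exp (ω ^ 2) * Afun ω := by
        calc (1:ℝ) / (ω + Real.sqrt (ω ^ 2 + 2))
            = Real.exp (ω ^ 2) * (Real.exp (-ω ^ 2) / (ω + Real.sqrt (ω ^ 2 + 2))) := by
              rw [mul_div_assoc', hexp]
          _ ≤ Real.exp (ω ^ 2) * Afun ω :=
              mul_le_mul_of_nonneg_left hE (Real.exp_pos _).le
      have h2 := mul_le_mul_of_nonneg_left h1 hcoef.le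
      rw [mul_one_div] at h2
      nlinarith [h2]
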